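/- arXiv:1610.01975 — 2 statements merged into one kernel-verified Lean document; each statement's English description precedes it below -/
import Mathlib

section
/- Let n ≥ 1, let α, β ∈ (0,1), and let γ, ε, c, K be positive reals with 2γ < α·β. For z, w ∈ ℂ^n define the cone distance d_β(z, w) := ( | |z₁|^{β−1}·z₁ − |w₁|^{β−1}·w₁ |² + Σ_{i=2}^n |z_i − w_i|² )^{1/2}, where the map ζ ↦ |ζ|^{β−1}·ζ is extended by 0 at ζ = 0. Let x₀ ∈ ℂ^n with (x₀)₁ = 0, let U be an open neighborhood of x₀, let u : U → ℝ satisfy |u(z) − u(w)| ≤ K · d_β(z, w)^α for all z, w ∈ U, and let W : U → ℝ satisfy W(x₀) = 0 and W(z) ≥ c·|z₁|^{2γ} for all z ∈ U. Then the function u + ε·W does not attain a local maximum at x₀. -/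
/-- The branch-free power map `ζ ↦ |ζ|^(β-1) * ζ`, extended by `0` at `ζ = 0`. -/
noncomputable def conePow (β : ℝ) (ζ : ℂ) : ℂ :=
  if ζ = 0 then 0 else ((‖ζ‖ ^ (β - 1) : ℝ) : ℂ) * ζ

/-- The cone distance `d_β` on `ℂ^n` (with the cone along the first coordinate):
`d_β(z,w) = (| |z₁|^(β-1) z₁ - |w₁|^(β-1) w₁ |² + Σ_{i≥2} |z_i - w_i|²)^(1/2)`. -/
noncomputable def coneDist (β : ℝ) {n : ℕ} [NeZero n] (z w : Fin n → ℂ) : ℝ :=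
  (‖conePow β (z 0) - conePow β (w 0)‖ ^ 2 +
      ∑ i ∈ Finset.univ.erase (0 : Fin n), ‖z i - w i‖ ^ 2) ^ ((1 : ℝ) / 2)

/-- Jeffres' trick, local form: if `u` is `α`-Hölder with respect to the cone distance
`d_β`, `2γ < α·β`, and `W` vanishes at `x₀` (a point of the divisor `{z₁ = 0}`) while
`W(z) ≥ c·|z₁|^(2γ)` nearby, then `u + ε·W` has no local maximum at `x₀`. -/
theorem stmt_2 (n : ℕ) [NeZero n] (α β γ ε c K : ℝ)
    (hα : α ∈ Set.Ioo (0 : ℝ) 1) (hβ : β ∈ Set.Ioo (0 : ℝ) 1)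
    (hγ : 0 < γ) (hε : 0 < ε) (hc : 0 < c) (hK : 0 < K) (hγαβ : 2 * γ < α * β)
    (x₀ : Fin n → ℂ) (hx₀ : x₀ 0 = 0)
    (U : Set (Fin n → ℂ)) (hU : IsOpen U) (hx₀U : x₀ ∈ U)
    (u W : (Fin n → ℂ) → ℝ)
    (hu : ∀ z ∈ U, ∀ w ∈ U, |u z - u w| ≤ K * coneDist β z w ^ α)
    (hW₀ : W x₀ = 0) (hW : ∀ z ∈ U, c * ‖z 0‖ ^ (2 * γ) ≤ W z) :
    ¬ IsLocalMax (fun z => u z + ε * W z) x₀ := by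
  intro h
  obtain ⟨δ, hδ, hball⟩ := Metric.eventually_nhds_iff.mp
    (h.and (Filter.eventually_of_mem (hU.mem_nhds hx₀U) (fun z hz => hz)))
  set s : ℝ := α * β - 2 * γ with hs_def
  have hs : 0 < s := by simp [hs_def]; linarith
  set t₀ : ℝ := (ε * c / K) ^ (1 / s) with ht₀_def
  have ht₀ : 0 < t₀ := Real.rpow_pos_of_pos (by positivity) _
  set t : ℝ := min (δ / 2) (t₀ / 2) with ht_def
  have ht : 0 < t := lt_min (by linarith) (by linarith)
  have htδ : t < δ := lt_of_le_of_lt (min_le_left _ _) (by linarith)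
  have htt₀ : t < t₀ := lt_of_le_of_lt (min_le_right _ _) (by linarith)
  set z : Fin n → ℂ := Function.update x₀ 0 (t : ℂ) with hz_def
  have hz0 : z 0 = (t : ℂ) := Function.update_self 0 _ x₀
  have hzi : ∀ i : Fin n, i ≠ 0 → z i = x₀ i := fun i hi => Function.update_of_ne hi _ _
  have hdist : dist z x₀ ≤ t := by
    rw [dist_pi_le_iff ht.le]
    intro i
    rcases eq_or_ne i 0 with rfl | hi
    · rw [hz0, hx₀]
      simp [Complex.dist_eq, abs_of_nonneg ht.le]
    · rw [hzi i hi]; simp [ht.le]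
  obtain ⟨hmax, hzU⟩ := hball (lt_of_le_of_lt hdist htδ)
  -- compute the cone distance
  have htC : (t : ℂ) ≠ 0 := by exact_mod_cast ht.ne'
  have habs : ‖(t : ℂ)‖ = t := by
    rw [Complex.norm_real, Real.norm_eq_abs, abs_of_nonneg ht.le]
  have hcp : ‖conePow β (t : ℂ)‖ = t ^ β := by
    rw [conePow, if_neg htC, norm_mul, Complex.norm_real, habs, Real.norm_eq_abs,
      abs_of_nonneg (Real.rpow_nonneg ht.le _)]
    rw [← Real.rpow_add_one ht.ne' (β - 1)]
    norm_num
  have hsum : ∑ i ∈ Finset.univ.erase (0 : Fin n), ‖z i - x₀ i‖ ^ 2 = 0 := by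
    refine Finset.sum_eq_zero fun i hi => ?_
    rw [hzi i (Finset.ne_of_mem_erase hi)]
    simp
  have hcd : coneDist β z x₀ = t ^ β := by
    rw [coneDist, hsum, hz0, hx₀]
    have : conePow β (0 : ℂ) = 0 := by simp [conePow]
    rw [this, sub_zero, hcp, add_zero]
    rw [← Real.rpow_natCast (t ^ β) 2, ← Real.rpow_mul (Real.rpow_nonneg ht.le β)]
    norm_num
  -- the key inequalities
  have h1 : ε * (c * t ^ (2 * γ)) ≤ u x₀ - u z := by
    have hWz := hW z hzU
    rw [hz0, habs] at hWz
    have : u z + ε * W z ≤ u x₀ + ε * W x₀ := hmax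
    rw [hW₀] at this
    nlinarith
  have h2 : u x₀ - u z ≤ K * t ^ (β * α) := by
    have := hu z hzU x₀ hx₀U
    rw [hcd, ← Real.rpow_mul ht.le, abs_sub_comm] at this
    calc u x₀ - u z ≤ |u x₀ - u z| := le_abs_self _
      _ ≤ K * t ^ (β * α) := this
  have h3 : K * t ^ (β * α) < ε * c * t ^ (2 * γ) := by
    have hts : t ^ s < ε * c / K := by
      calc t ^ s < t₀ ^ s := Real.rpow_lt_rpow ht.le htt₀ hs
        _ = ε * c / K := by
          rw [ht₀_def, ← Real.rpow_mul (by positivity), one_div,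
            inv_mul_cancel₀ hs.ne', Real.rpow_one]
    have hsplit : t ^ (β * α) = t ^ s * t ^ (2 * γ) := by
      rw [← Real.rpow_add ht, hs_def]
      ring_nf
    rw [hsplit, ← mul_assoc]
    have h2γ : (0 : ℝ) < t ^ (2 * γ) := Real.rpow_pos_of_pos ht _
    have : K * t ^ s < ε * c := by
      have := (lt_div_iff₀ hK).mp hts
      linarith [this, mul_comm (t ^ s) K]
    nlinarith
  linarith
end

section
/- Let k ≥ 1 be a natural number, let p ≥ 1 be a real number, and let R > 0. Define g : ℂ → ℂ by g(z) := |z|^{p−k} · z^k for z ≠ 0 and g(0) := 0 (here |z|^{p−k} is the real power of the modulus). Then there exists a constant C > 0 such that |g(z) − g(w)| ≤ C · |z − w| for all z, w in the closed disk of radius R centered at 0. -/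
lemma aux_pow_diff (k : ℕ) (a : ℝ) (ha : 0 ≤ a) (z w : ℂ) (hz : ‖z‖ ≤ a)
    (hw : ‖w‖ ≤ a) :
    ‖z ^ k - w ^ k‖ ≤ k * a ^ (k - 1) * ‖z - w‖ := by
  rw [← geom_sum₂_mul z w k, norm_mul]
  gcongr
  calc ‖∑ i ∈ Finset.range k, z ^ i * w ^ (k - 1 - i)‖
      ≤ ∑ i ∈ Finset.range k, ‖z ^ i * w ^ (k - 1 - i)‖ :=
        norm_sum_le _ _
    _ ≤ ∑ i ∈ Finset.range k, a ^ (k - 1) := by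
        apply Finset.sum_le_sum
        intro i hi
        have hik := Finset.mem_range.mp hi
        rw [norm_mul, norm_pow, norm_pow]
        have h1 : ‖z‖ ^ i * ‖w‖ ^ (k-1-i) ≤ a ^ i * a ^ (k-1-i) := by
          have := norm_nonneg z
          have := norm_nonneg w
          gcongr
        calc ‖z‖ ^ i * ‖w‖ ^ (k-1-i) ≤ a ^ i * a ^ (k-1-i) := h1
          _ = a ^ (k - 1) := by
            rw [← pow_add]
            congr 1
            omega
    _ = k * a ^ (k - 1) := by rw [Finset.sum_const, Finset.card_range, nsmul_eq_mul]

open Real in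
lemma aux_rpow_mvt (q b a : ℝ) (hb : 0 < b) (hba : b ≤ a) :
    ∃ c, b ≤ c ∧ c ≤ a ∧ a ^ q - b ^ q = q * c ^ (q - 1) * (a - b) := by
  rcases eq_or_lt_of_le hba with rfl | hlt
  · exact ⟨b, le_rfl, le_rfl, by ring⟩
  · obtain ⟨c, hc, heq⟩ := exists_hasDerivAt_eq_slope (fun x => x ^ q)
      (fun x => q * x ^ (q - 1)) hlt
      (by
        apply ContinuousOn.rpow_const continuousOn_id
        intro x hx
        exact Or.inl (ne_of_gt (lt_of_lt_of_le hb hx.1)))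
      (fun x hx => Real.hasDerivAt_rpow_const (Or.inl (ne_of_gt (hb.trans hx.1))))
    refine ⟨c, hc.1.le, hc.2.le, ?_⟩
    rw [heq, div_mul_cancel₀]
    exact sub_ne_zero.mpr hlt.ne'

open Real in
lemma aux_term2 (k : ℕ) (hk : 1 ≤ k) (p : ℝ) (hp : 1 ≤ p) (R : ℝ) (hR : 0 < R)
    (b a : ℝ) (hb : 0 ≤ b) (hba : b ≤ a) (haR : a ≤ R) :
    b ^ k * |a ^ (p - (k:ℝ)) - b ^ (p - (k:ℝ))| ≤ |p - (k:ℝ)| * R ^ (p - 1) * (a - b) := by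
  set q := p - (k:ℝ) with hq
  rcases eq_or_lt_of_le hb with rfl | hb'
  · simp [zero_pow (by omega : k ≠ 0)]
    positivity
  obtain ⟨c, hbc, hca, hc⟩ := aux_rpow_mvt q b a hb' hba
  have hc0 : 0 < c := lt_of_lt_of_le hb' hbc
  have ha0 : 0 < a := lt_of_lt_of_le hc0 hca
  rw [hc, abs_mul, abs_mul, abs_of_nonneg (rpow_nonneg hc0.le _),
    abs_of_nonneg (by linarith : (0:ℝ) ≤ a - b)]
  have key : b ^ k * c ^ (q - 1) ≤ R ^ (p - 1) := by
    rcases le_or_gt 1 q with h1 | h1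
    · calc b ^ k * c ^ (q - 1) ≤ a ^ k * a ^ (q - 1) := by
            apply mul_le_mul (pow_le_pow_left₀ hb hba k)
              (rpow_le_rpow hc0.le hca (by linarith)) (rpow_nonneg hc0.le _)
              (pow_nonneg ha0.le _)
        _ = a ^ (p - 1) := by
            rw [← Real.rpow_natCast a k, ← Real.rpow_add ha0]
            congr 1
            rw [hq]; ring
        _ ≤ R ^ (p - 1) := rpow_le_rpow ha0.le haR (by linarith)
    · calc b ^ k * c ^ (q - 1) ≤ b ^ k * b ^ (q - 1) := by
            apply mul_le_mul_of_nonneg_left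
              (rpow_le_rpow_of_nonpos hb' hbc (by linarith)) (pow_nonneg hb _)
        _ = b ^ (p - 1) := by
            rw [← Real.rpow_natCast b k, ← Real.rpow_add hb']
            congr 1
            rw [hq]; ring
        _ ≤ R ^ (p - 1) := rpow_le_rpow hb (hba.trans haR) (by linarith)
  calc b ^ k * (|q| * c ^ (q - 1) * (a - b))
      = |q| * (b ^ k * c ^ (q - 1)) * (a - b) := by ring
    _ ≤ |q| * R ^ (p - 1) * (a - b) := by
        apply mul_le_mul_of_nonneg_right (mul_le_mul_of_nonneg_left key (abs_nonneg q))
        linarith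

open Real in
lemma aux_key (k : ℕ) (hk : 1 ≤ k) (p : ℝ) (hp : 1 ≤ p) (R : ℝ) (hR : 0 < R)
    (z w : ℂ) (hz : ‖z‖ ≤ R) (hw : ‖w‖ ≤ R)
    (hwz : ‖w‖ ≤ ‖z‖) :
    ‖(if z = 0 then 0 else ((‖z‖ ^ (p - (k : ℝ)) : ℝ) : ℂ) * z ^ k) -
         (if w = 0 then 0 else ((‖w‖ ^ (p - (k : ℝ)) : ℝ) : ℂ) * w ^ k)‖
      ≤ ((k : ℝ) + |p - (k:ℝ)|) * R ^ (p - 1) * ‖z - w‖ := by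
  set q := p - (k:ℝ) with hq
  have hRp : 0 < R ^ (p - 1) := rpow_pos_of_pos hR _
  have hk1 : (1:ℝ) ≤ (k:ℝ) := by exact_mod_cast hk
  by_cases hz0 : z = 0
  · have hw0 : w = 0 := by
      rw [hz0] at hwz; simp at hwz
      exact hwz
    subst hz0 hw0
    simp
  set a := ‖z‖ with ha
  have ha0 : 0 < a := norm_pos_iff.mpr hz0
  by_cases hw0 : w = 0
  · subst hw0
    rw [if_neg hz0, if_pos rfl, sub_zero, sub_zero, norm_mul, norm_pow, Complex.norm_real, Real.norm_eq_abs, abs_of_nonneg (rpow_nonneg ha0.le _)]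
    calc a ^ q * a ^ k = a ^ (p - 1) * a := by
          rw [← Real.rpow_natCast a k, ← Real.rpow_add ha0, ← Real.rpow_add_one ha0.ne']
          congr 1; rw [hq]; ring
      _ ≤ ((k : ℝ) + |q|) * R ^ (p - 1) * ‖z‖ := by
          rw [← ha]
          have h1 : a ^ (p - 1) ≤ R ^ (p - 1) := rpow_le_rpow ha0.le hz (by linarith)
          have h2 : (1:ℝ) ≤ (k:ℝ) + |q| := by
            have := abs_nonneg q; linarith
          nlinarith [mul_le_mul_of_nonneg_right h1 ha0.le,
            mul_nonneg (mul_nonneg (by linarith : (0:ℝ) ≤ (k:ℝ) + |q| - 1) hRp.le) ha0.le]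
  · set b := ‖w‖ with hb
    have hb0 : 0 < b := norm_pos_iff.mpr hw0
    simp only [hz0, hw0, if_false]
    have decomp : ((a ^ q : ℝ) : ℂ) * z ^ k - ((b ^ q : ℝ) : ℂ) * w ^ k
        = ((a ^ q : ℝ) : ℂ) * (z ^ k - w ^ k) + (((a ^ q : ℝ) : ℂ) - ((b ^ q : ℝ) : ℂ)) * w ^ k := by
      ring
    rw [decomp]
    calc ‖((a ^ q : ℝ) : ℂ) * (z ^ k - w ^ k)
            + (((a ^ q : ℝ) : ℂ) - ((b ^ q : ℝ) : ℂ)) * w ^ k‖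
        ≤ ‖((a ^ q : ℝ) : ℂ) * (z ^ k - w ^ k)‖
          + ‖(((a ^ q : ℝ) : ℂ) - ((b ^ q : ℝ) : ℂ)) * w ^ k‖ :=
          norm_add_le _ _
      _ = a ^ q * ‖z ^ k - w ^ k‖ + |a ^ q - b ^ q| * b ^ k := by
          rw [norm_mul, norm_mul, Complex.norm_real, Real.norm_eq_abs, abs_of_nonneg (rpow_nonneg ha0.le _),
            norm_pow, ← Complex.ofReal_sub, Complex.norm_real, Real.norm_eq_abs, ← hb]
      _ ≤ a ^ q * ((k : ℝ) * a ^ (k - 1) * ‖z - w‖)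
          + |q| * R ^ (p - 1) * (a - b) := by
          apply add_le_add
          · exact mul_le_mul_of_nonneg_left (aux_pow_diff k a ha0.le z w le_rfl hwz)
              (rpow_nonneg ha0.le _)
          · rw [mul_comm]
            exact aux_term2 k hk p hp R hR b a hb0.le hwz hz
      _ ≤ (k : ℝ) * R ^ (p - 1) * ‖z - w‖
          + |q| * R ^ (p - 1) * ‖z - w‖ := by
          have e1 : a ^ q * ((k : ℝ) * a ^ (k - 1) * ‖z - w‖)
              = (k:ℝ) * (a ^ q * a ^ ((k:ℕ) - 1)) * ‖z - w‖ := by ring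
          have e2 : a ^ q * a ^ ((k:ℕ) - 1) = a ^ (p - 1) := by
            rw [← Real.rpow_natCast a (k - 1), ← Real.rpow_add ha0]
            congr 1
            rw [Nat.cast_sub hk, hq]; push_cast; ring
          have e3 : a ^ (p - 1) ≤ R ^ (p - 1) := rpow_le_rpow ha0.le hz (by linarith)
          have e4 : a - b ≤ ‖z - w‖ := by
            have := norm_sub_norm_le z w
            simpa [← ha, ← hb] using this
          have e5 : 0 ≤ ‖z - w‖ := norm_nonneg _
          have e6 : 0 ≤ |q| * R ^ (p - 1) := by positivity
          rw [e1, e2]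
          have := mul_le_mul_of_nonneg_right
            (mul_le_mul_of_nonneg_left e3 (by linarith : (0:ℝ) ≤ (k:ℝ))) e5
          nlinarith
      _ = ((k : ℝ) + |q|) * R ^ (p - 1) * ‖z - w‖ := by ring

/-- For `k ≥ 1`, `p ≥ 1` and `R > 0`, the map `g(z) = |z|^(p-k) * z^k` (with `g 0 = 0`)
is Lipschitz on the closed disk of radius `R`. -/
theorem stmt_7 (k : ℕ) (hk : 1 ≤ k) (p : ℝ) (hp : 1 ≤ p) (R : ℝ) (hR : 0 < R) :
    ∃ C : ℝ, 0 < C ∧ ∀ z ∈ Metric.closedBall (0 : ℂ) R, ∀ w ∈ Metric.closedBall (0 : ℂ) R,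
      ‖(if z = 0 then 0 else ((‖z‖ ^ (p - (k : ℝ)) : ℝ) : ℂ) * z ^ k) -
           (if w = 0 then 0 else ((‖w‖ ^ (p - (k : ℝ)) : ℝ) : ℂ) * w ^ k)‖
        ≤ C * ‖z - w‖ := by
  refine ⟨((k:ℝ) + |p - (k:ℝ)|) * R ^ (p - 1), ?_, ?_⟩
  · have hk1 : (1:ℝ) ≤ (k:ℝ) := by exact_mod_cast hk
    have h1 := abs_nonneg (p - (k:ℝ))
    have h2 := Real.rpow_pos_of_pos hR (p - 1)
    exact mul_pos (by linarith) h2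
  · intro z hz w hw
    rw [Metric.mem_closedBall, dist_zero_right] at hz hw
    rcases le_total (‖w‖) (‖z‖) with h | h
    · exact aux_key k hk p hp R hR z w hz hw h
    · have key := aux_key k hk p hp R hR w z hw hz h
      rw [norm_sub_rev, norm_sub_rev z w]
      exact key
end
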